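/- Let ε > 0 and let (d_n, k_n) be a sequence of admissible dimension pairs with d_n → ∞ and liminf_{n→∞} k_n/d_n > 1/2. Then J(d_n, k_n, ε) → 1 as n → ∞, where J(d,k,ε) := ( ∫_{σ_{d,k} ε}^{1} x^{1−(d−1)/(k−1)} (1 − x^{2/(k−1)})^{(d−k)/2 − 1} dx ) / ( ∫_0^1 x^{1−(d−1)/(k−1)} (1 − x^{2/(k−1)})^{(d−k)/2 − 1} dx ), with the convention that the numerator's integral is over the (possibly empty) interval (min{σ_{d,k} ε, 1}, 1). -/

import Mathlib

open MeasureTheory Filter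
open Set

/-- `σ_{d,k} > 0` defined by `σ_{d,k}² = π^{(d−k)/2} Γ((2k−d−1)/2)/Γ((k−1)/2)`. -/
noncomputable def sigmaHyp (d k : ℕ) : ℝ :=
  Real.sqrt (Real.pi ^ (((d : ℝ) - k) / 2) * Real.Gamma ((2 * (k : ℝ) - d - 1) / 2) /
    Real.Gamma (((k : ℝ) - 1) / 2))

/-- The fraction `J(d,k,ε)` of the second moment of the Lévy measure `ν_{d,k}` carried by
`{x : |x| > σ_{d,k} ε}`; the numerator is an integral over `(min(σ_{d,k} ε, 1), 1)`. -/
noncomputable def Jfrac (d k : ℕ) (ε : ℝ) : ℝ :=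
  (∫ x in Set.Ioo (min (sigmaHyp d k * ε) 1) 1,
      x ^ (1 - ((d : ℝ) - 1) / ((k : ℝ) - 1)) *
        (1 - x ^ (2 / ((k : ℝ) - 1))) ^ (((d : ℝ) - k) / 2 - 1)) /
    (∫ x in Set.Ioo (0 : ℝ) 1,
      x ^ (1 - ((d : ℝ) - 1) / ((k : ℝ) - 1)) *
        (1 - x ^ (2 / ((k : ℝ) - 1))) ^ (((d : ℝ) - k) / 2 - 1))

set_option maxHeartbeats 1000000

-- from a.lean
lemma gamma_add_half_le {y : ℝ} (hy : 0 < y) :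
    Real.Gamma (y + 1/2) ≤ Real.Gamma y * Real.sqrt y := by
  have hc := Real.convexOn_log_Gamma
  have h2 := hc.2 (mem_Ioi.2 hy) (mem_Ioi.2 (by linarith : (0:ℝ) < y + 1))
    (by norm_num : (0:ℝ) ≤ 1/2) (by norm_num : (0:ℝ) ≤ 1/2) (by norm_num)
  have hmid : (1/2 : ℝ) • y + (1/2 : ℝ) • (y+1) = y + 1/2 := by ring_nf
  rw [hmid] at h2
  simp only [Function.comp_apply, smul_eq_mul] at h2
  have hG1 : Real.Gamma (y+1) = y * Real.Gamma y := Real.Gamma_add_one hy.ne'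
  have hGy : 0 < Real.Gamma y := Real.Gamma_pos_of_pos hy
  have hGy2 : 0 < Real.Gamma (y + 1/2) := Real.Gamma_pos_of_pos (by linarith)
  have hrhs : 1/2 * Real.log (Real.Gamma y) + 1/2 * Real.log (Real.Gamma (y+1))
      = Real.log (Real.Gamma y * Real.sqrt y) := by
    rw [hG1, Real.log_mul hy.ne' hGy.ne', Real.log_mul hGy.ne' (Real.sqrt_pos.2 hy).ne',
      Real.log_sqrt hy.le]
    ring
  rw [hrhs] at h2
  exact (Real.log_le_log_iff hGy2 (by positivity)).1 h2

-- from b.lean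
lemma gamma_step {z : ℝ} (hz : 1 ≤ z) :
    Real.sqrt (z - 1/2) * Real.Gamma z ≤ Real.Gamma (z + 1/2) := by
  have h0 : (0:ℝ) < z - 1/2 := by linarith
  have h1 : Real.Gamma (z + 1/2) = (z - 1/2) * Real.Gamma (z - 1/2) := by
    have := Real.Gamma_add_one h0.ne'
    rw [show z - 1/2 + 1 = z + 1/2 by ring] at this
    exact this
  have h2 : Real.Gamma z ≤ Real.Gamma (z - 1/2) * Real.sqrt (z - 1/2) := by
    have := gamma_add_half_le h0
    rwa [show z - 1/2 + 1/2 = z by ring] at this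
  have hs : 0 < Real.sqrt (z - 1/2) := Real.sqrt_pos.2 h0
  calc Real.sqrt (z - 1/2) * Real.Gamma z
      ≤ Real.sqrt (z - 1/2) * (Real.Gamma (z - 1/2) * Real.sqrt (z - 1/2)) :=
        mul_le_mul_of_nonneg_left h2 hs.le
    _ = (z - 1/2) * Real.Gamma (z - 1/2) := by
        rw [← mul_assoc, mul_comm (Real.sqrt _) _, mul_assoc,
          Real.mul_self_sqrt h0.le, mul_comm]
    _ = Real.Gamma (z + 1/2) := h1.symm

/-- `Γ(x + m/2) ≥ (x-1/2)^(m/2) Γ(x)` for `x ≥ 1`. -/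
lemma gamma_ratio_lower {x : ℝ} (hx : 1 ≤ x) (m : ℕ) :
    (x - 1/2) ^ ((m : ℝ)/2) * Real.Gamma x ≤ Real.Gamma (x + m/2) := by
  have h0 : (0:ℝ) < x - 1/2 := by linarith
  induction m with
  | zero => simp
  | succ m ih =>
      have hz : (1:ℝ) ≤ x + m/2 := by
        have : (0:ℝ) ≤ (m:ℝ)/2 := by positivity
        linarith
      have step := gamma_step hz
      have hmono : Real.sqrt (x - 1/2) ≤ Real.sqrt (x + (m:ℝ)/2 - 1/2) := by
        apply Real.sqrt_le_sqrt
        have : (0:ℝ) ≤ (m:ℝ)/2 := by positivity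
        linarith
      have hGpos : 0 < Real.Gamma (x + m/2) := Real.Gamma_pos_of_pos (by linarith)
      have key : Real.sqrt (x - 1/2) * ((x - 1/2) ^ ((m : ℝ)/2) * Real.Gamma x)
          ≤ Real.Gamma (x + (m+1)/2) := by
        calc Real.sqrt (x - 1/2) * ((x - 1/2) ^ ((m : ℝ)/2) * Real.Gamma x)
            ≤ Real.sqrt (x - 1/2) * Real.Gamma (x + m/2) := by
              apply mul_le_mul_of_nonneg_left ih (Real.sqrt_nonneg _)
          _ ≤ Real.sqrt (x + (m:ℝ)/2 - 1/2) * Real.Gamma (x + m/2) :=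
              mul_le_mul_of_nonneg_right hmono hGpos.le
          _ ≤ Real.Gamma (x + (m:ℝ)/2 + 1/2) := gamma_step hz
          _ = Real.Gamma (x + ((m:ℝ)+1)/2) := by ring_nf
      have hsqrt : Real.sqrt (x - 1/2) = (x - 1/2) ^ ((1:ℝ)/2) :=
        Real.sqrt_eq_rpow _
      have hpow : (x - 1/2) ^ (((m:ℕ)+1 : ℝ)/2)
          = Real.sqrt (x - 1/2) * (x - 1/2) ^ ((m : ℝ)/2) := by
        rw [hsqrt, ← Real.rpow_add h0]
        ring_nf
      push_cast
      push_cast at key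
      rw [hpow, mul_assoc]
      exact key

-- from c.lean
/-- Beta-type integrability on `(0,1)`. -/
lemma integrableOn_betaKernel {q b : ℝ} (hq : -1 < q) (hb : -1 < b) :
    IntegrableOn (fun x : ℝ => x ^ q * (1 - x) ^ b) (Ioo (0:ℝ) 1) := by
  have hmeas : AEStronglyMeasurable (fun x : ℝ => x ^ q * (1 - x) ^ b) volume := by
    apply Measurable.aestronglyMeasurable
    exact (measurable_id.pow_const q).mul ((measurable_const.sub measurable_id).pow_const b)
  have h1 : IntegrableOn (fun x : ℝ => x ^ q * (1 - x) ^ b) (Ioo (0:ℝ) (1/2)) := by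
    have hint : IntegrableOn (fun x : ℝ => x ^ q) (Ioo (0:ℝ) (1/2)) := by
      have := intervalIntegral.intervalIntegrable_rpow' (a := (0:ℝ)) (b := 1/2) hq
      rwa [intervalIntegrable_iff_integrableOn_Ioo_of_le (by norm_num)] at this
    refine Integrable.mono' (hint.const_mul (max 1 ((1/2:ℝ) ^ b))) (hmeas.restrict) ?_
    rw [ae_restrict_iff' measurableSet_Ioo]
    refine Eventually.of_forall fun x hx => ?_
    obtain ⟨hx0, hx1⟩ := hx
    have h1x : (1/2:ℝ) ≤ 1 - x := by linarith
    have hxq : (0:ℝ) ≤ x ^ q := Real.rpow_nonneg hx0.le q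
    have hub : (1 - x) ^ b ≤ max 1 ((1/2:ℝ) ^ b) := by
      rcases le_or_gt 0 b with hb0 | hb0
      · exact le_max_of_le_left (Real.rpow_le_one (by linarith) (by linarith) hb0)
      · exact le_max_of_le_right (Real.rpow_le_rpow_of_nonpos (by norm_num) h1x hb0.le)
    rw [Real.norm_eq_abs, abs_of_nonneg (mul_nonneg hxq (Real.rpow_nonneg (by linarith) b))]
    rw [mul_comm (max 1 ((1/2:ℝ) ^ b)) (x ^ q)] at *
    exact mul_le_mul_of_nonneg_left hub hxq
  have h2 : IntegrableOn (fun x : ℝ => x ^ q * (1 - x) ^ b) (Ico (1/2:ℝ) 1) := by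
    have hint : IntegrableOn (fun x : ℝ => (1 - x) ^ b) (Ioo (1/2:ℝ) 1) := by
      have h0 := intervalIntegral.intervalIntegrable_rpow' (a := (0:ℝ)) (b := 1/2) hb
      have := (h0.comp_sub_left 1).symm
      simp only [sub_zero] at this
      rwa [show (1:ℝ) - 1/2 = 1/2 by norm_num,
        intervalIntegrable_iff_integrableOn_Ioo_of_le (by norm_num)] at this
    rw [integrableOn_Ico_iff_integrableOn_Ioo]
    refine Integrable.mono' (hint.const_mul (max 1 ((1/2:ℝ) ^ q))) (hmeas.restrict) ?_
    rw [ae_restrict_iff' measurableSet_Ioo]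
    refine Eventually.of_forall fun x hx => ?_
    obtain ⟨hx0, hx1⟩ := hx
    have hxb : (0:ℝ) ≤ (1 - x) ^ b := Real.rpow_nonneg (by linarith) b
    have hub : x ^ q ≤ max 1 ((1/2:ℝ) ^ q) := by
      rcases le_or_gt 0 q with hq0 | hq0
      · exact le_max_of_le_left (Real.rpow_le_one (by linarith) hx1.le hq0)
      · exact le_max_of_le_right (Real.rpow_le_rpow_of_nonpos (by norm_num) hx0.le hq0.le)
    rw [Real.norm_eq_abs, abs_of_nonneg (mul_nonneg (Real.rpow_nonneg (by linarith) q) hxb)]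
    exact mul_le_mul_of_nonneg_right hub hxb
  exact ((h1.union h2).mono_set (by
    intro x hx
    rcases le_or_gt (1/2:ℝ) x with h | h
    · exact Or.inr ⟨h, hx.2⟩
    · exact Or.inl ⟨hx.1, h⟩))

-- from d.lean
lemma one_sub_div_le {p x : ℝ} (hp : 1 ≤ p) (hx0 : 0 ≤ x) (hx1 : x ≤ 1) :
    (1 - x)/p ≤ 1 - x ^ (1/p:ℝ) := by
  have hp0 : (0:ℝ) < p := by linarith
  have h := rpow_one_add_le_one_add_mul_self (s := x - 1) (by linarith)
    (by positivity : (0:ℝ) ≤ 1/p) (by rw [div_le_one hp0]; linarith)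
  rw [show (1:ℝ) + (x - 1) = x by ring] at h
  have : x ^ (1/p:ℝ) ≤ 1 + (x-1)/p := by
    calc x ^ (1/p:ℝ) ≤ 1 + 1/p * (x - 1) := h
    _ = 1 + (x-1)/p := by ring
  have h2 : (1-x)/p = -((x-1)/p) := by ring
  have h3 : (x-1)/p = 1/p * (x-1) := by ring
  linarith

lemma kernel_factor_le {p β x : ℝ} (hp : 1 ≤ p) (hβ : 0 < β) (hx0 : 0 ≤ x) (hx1 : x ≤ 1) :
    (1 - x ^ (1/p:ℝ)) ^ (β - 1) ≤ p * (1 - x) ^ (min (β-1) 0) := by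
  have hp0 : (0:ℝ) < p := by linarith
  have hxp1 : x ^ (1/p:ℝ) ≤ 1 := Real.rpow_le_one hx0 hx1 (by positivity)
  have hkey := one_sub_div_le hp hx0 hx1
  rcases le_or_gt β 1 with hβ1 | hβ1
  · rw [min_eq_left (by linarith : β - 1 ≤ 0)]
    rcases eq_or_lt_of_le hx1 with rfl | hx1'
    · simp only [Real.one_rpow, sub_self]
      exact le_mul_of_one_le_left (Real.rpow_nonneg le_rfl _) hp
    · have hpos : (0:ℝ) < (1 - x)/p := by
        apply div_pos (by linarith) hp0
      calc (1 - x ^ (1/p:ℝ)) ^ (β - 1) ≤ ((1-x)/p) ^ (β-1) :=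
            Real.rpow_le_rpow_of_nonpos hpos hkey (by linarith)
        _ = (1-x) ^ (β-1) / p ^ (β-1) := Real.div_rpow (by linarith) hp0.le _
        _ = (1-x) ^ (β-1) * p ^ (1-β) := by
            rw [div_eq_mul_inv, ← Real.rpow_neg hp0.le, neg_sub]
        _ ≤ (1-x) ^ (β-1) * p := by
            apply mul_le_mul_of_nonneg_left _ (Real.rpow_nonneg (by linarith) _)
            calc p ^ (1-β) ≤ p ^ (1:ℝ) :=
                Real.rpow_le_rpow_of_exponent_le hp (by linarith)
              _ = p := Real.rpow_one p
        _ = p * (1-x) ^ (β-1) := mul_comm _ _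
  · rw [min_eq_right (by linarith : (0:ℝ) ≤ β - 1), Real.rpow_zero, mul_one]
    calc (1 - x ^ (1/p:ℝ)) ^ (β - 1) ≤ 1 :=
        Real.rpow_le_one (by linarith) (by linarith [Real.rpow_nonneg hx0 (1/p:ℝ)]) (by linarith)
      _ ≤ p := hp

lemma integrableOn_kernel {p q β : ℝ} (hp : 1 ≤ p) (hq : -1 < q) (hβ : 0 < β) :
    IntegrableOn (fun x : ℝ => x ^ q * (1 - x ^ (1/p:ℝ)) ^ (β - 1)) (Ioo (0:ℝ) 1) := by
  have hmin : (-1:ℝ) < min (β-1) 0 := by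
    rcases le_or_gt β 1 with h | h
    · rw [min_eq_left (by linarith)]; linarith
    · rw [min_eq_right (by linarith)]; norm_num
  have hdom := (integrableOn_betaKernel hq hmin).const_mul p
  refine Integrable.mono' hdom ?_ ?_
  · apply Measurable.aestronglyMeasurable (by fun_prop) |>.restrict
  · rw [ae_restrict_iff' measurableSet_Ioo]
    refine Eventually.of_forall fun x hx => ?_
    obtain ⟨hx0, hx1⟩ := hx
    have h1 : 0 ≤ x ^ q := Real.rpow_nonneg hx0.le q
    have h2 : 0 ≤ (1 - x ^ (1/p:ℝ)) ^ (β - 1) := by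
      apply Real.rpow_nonneg
      have : x ^ (1/p:ℝ) ≤ 1 := Real.rpow_le_one hx0.le hx1.le (by positivity)
      linarith
    rw [Real.norm_eq_abs, abs_of_nonneg (mul_nonneg h1 h2)]
    calc x ^ q * (1 - x ^ (1/p:ℝ)) ^ (β - 1)
        ≤ x ^ q * (p * (1-x) ^ (min (β-1) 0)) :=
          mul_le_mul_of_nonneg_left (kernel_factor_le hp hβ hx0.le hx1.le) h1
      _ = p * (x ^ q * (1-x) ^ (min (β-1) 0)) := by ring

-- from e.lean
lemma sq_image_Ioo : (fun y : ℝ => y ^ 2) '' Ioo (0:ℝ) 1 = Ioo (0:ℝ) 1 := by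
  ext z
  constructor
  · rintro ⟨y, ⟨hy0, hy1⟩, rfl⟩
    refine ⟨by positivity, ?_⟩
    show y ^ 2 < 1
    nlinarith
  · rintro ⟨hz0, hz1⟩
    refine ⟨Real.sqrt z, ⟨Real.sqrt_pos.2 hz0, ?_⟩, Real.sq_sqrt hz0.le⟩
    calc Real.sqrt z < Real.sqrt 1 := Real.sqrt_lt_sqrt hz0.le hz1
      _ = 1 := Real.sqrt_one

lemma sq_injOn : InjOn (fun y : ℝ => y ^ 2) (Ioo (0:ℝ) 1) := by
  intro a ha b hb h
  simp only at h
  exact le_antisymm (by nlinarith [ha.1, hb.1]) (by nlinarith [ha.1, hb.1])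

lemma one_add_rpow_le {t β : ℝ} (h0 : 0 ≤ t) (h1 : t ≤ 1) (hβ : 0 ≤ β) :
    (1+t) ^ (β-1) ≤ 2 ^ β := by
  rcases le_or_gt 1 β with hβ1 | hβ1
  · calc (1+t) ^ (β-1) ≤ 2 ^ (β-1) :=
        Real.rpow_le_rpow (by linarith) (by linarith) (by linarith)
    _ ≤ 2 ^ β := Real.rpow_le_rpow_of_exponent_le (by norm_num) (by linarith)
  · calc (1+t) ^ (β-1) ≤ 1 := Real.rpow_le_one_of_one_le_of_nonpos (by linarith) (by linarith)
    _ ≤ 2 ^ β := Real.one_le_rpow (by norm_num) hβ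

lemma step2 {p α β : ℝ} (hp : 1 ≤ p) (hpe : p = α + β) (hα : 1 ≤ α) (hβ : 1/2 ≤ β) :
    ∫ x in Ioo (0:ℝ) 1, x ^ (-β/p - α/(2*p)) * (1 - x ^ (1/p:ℝ)) ^ (β - 1)
      ≤ 2 ^ (β+1) * ∫ x in Ioo (0:ℝ) 1, x ^ (-β/p) * (1 - x ^ (1/p:ℝ)) ^ (β - 1) := by
  have hp0 : (0:ℝ) < p := by linarith
  have hqF : (-1:ℝ) < -β/p := by
    rw [neg_div, neg_lt_neg_iff, div_lt_one hp0]; linarith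
  have hqG : (-1:ℝ) < -β/p - α/(2*p) := by
    rw [show -β/p - α/(2*p) = -((β + α/2)/p) by ring, neg_lt_neg_iff, div_lt_one hp0]
    linarith
  have hFint := integrableOn_kernel hp hqF (by linarith : (0:ℝ) < β)
  have hGint := integrableOn_kernel hp hqG (by linarith : (0:ℝ) < β)
  have hderiv : ∀ y ∈ Ioo (0:ℝ) 1,
      HasDerivWithinAt (fun y : ℝ => y ^ 2) (2*y) (Ioo (0:ℝ) 1) y := by
    intro y _
    simpa using (hasDerivAt_pow 2 y).hasDerivWithinAt
  have hsub := integral_image_eq_integral_abs_deriv_smul measurableSet_Ioo hderiv sq_injOn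
    (fun x => x ^ (-β/p - α/(2*p)) * (1 - x ^ (1/p:ℝ)) ^ (β - 1))
  rw [sq_image_Ioo] at hsub
  rw [hsub]
  have hint1 : IntegrableOn
      (fun y : ℝ => |2*y| • ((y^2) ^ (-β/p - α/(2*p)) * (1 - (y^2) ^ (1/p:ℝ)) ^ (β - 1)))
      (Ioo (0:ℝ) 1) := by
    have := (integrableOn_image_iff_integrableOn_abs_deriv_smul measurableSet_Ioo hderiv sq_injOn
      (fun x => x ^ (-β/p - α/(2*p)) * (1 - x ^ (1/p:ℝ)) ^ (β - 1))).1
    rw [sq_image_Ioo] at this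
    exact this hGint
  have hbound : ∀ y ∈ Ioo (0:ℝ) 1,
      |2*y| • ((y^2) ^ (-β/p - α/(2*p)) * (1 - (y^2) ^ (1/p:ℝ)) ^ (β - 1))
        ≤ 2 ^ (β+1) * (y ^ (-β/p) * (1 - y ^ (1/p:ℝ)) ^ (β - 1)) := by
    intro y ⟨hy0, hy1⟩
    have hy2 : (y^2 : ℝ) = y ^ ((2:ℕ):ℝ) := (Real.rpow_natCast y 2).symm
    have e1 : ((y^2:ℝ)) ^ (-β/p - α/(2*p)) = y ^ (2 * (-β/p - α/(2*p))) := by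
      rw [hy2, ← Real.rpow_mul hy0.le]
      norm_num
    have e2 : ((y^2:ℝ)) ^ (1/p:ℝ) = (y ^ (1/p:ℝ)) ^ (2:ℕ) := by
      rw [hy2, ← Real.rpow_mul hy0.le, ← Real.rpow_natCast (y ^ (1/p:ℝ)) 2,
        ← Real.rpow_mul hy0.le]
      norm_num
      ring_nf
    have hyp1 : y ^ (1/p:ℝ) ≤ 1 := Real.rpow_le_one hy0.le hy1.le (by positivity)
    have hyp0 : 0 ≤ y ^ (1/p:ℝ) := Real.rpow_nonneg hy0.le _
    have e3 : (1 - (y^2:ℝ) ^ (1/p:ℝ)) = (1 - y ^ (1/p:ℝ)) * (1 + y ^ (1/p:ℝ)) := by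
      rw [e2]; ring
    have e4 : (1 - (y^2:ℝ) ^ (1/p:ℝ)) ^ (β-1)
        = (1 - y ^ (1/p:ℝ)) ^ (β-1) * (1 + y ^ (1/p:ℝ)) ^ (β-1) := by
      rw [e3, Real.mul_rpow (by linarith) (by linarith)]
    rw [abs_of_pos (by linarith : (0:ℝ) < 2*y), smul_eq_mul, e1, e4]
    have e5 : 2*y * (y ^ (2 * (-β/p - α/(2*p))) *
        ((1 - y ^ (1/p:ℝ)) ^ (β-1) * (1 + y ^ (1/p:ℝ)) ^ (β-1)))
        = 2 * (1 + y ^ (1/p:ℝ)) ^ (β-1) * (y ^ (1 + 2 * (-β/p - α/(2*p))) *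
            (1 - y ^ (1/p:ℝ)) ^ (β-1)) := by
      rw [Real.rpow_add hy0, Real.rpow_one]
      ring
    rw [e5]
    have hab : α + β ≠ 0 := by rw [← hpe]; exact hp0.ne'
    have e6 : 1 + 2 * (-β/p - α/(2*p)) = -β/p := by
      rw [hpe]
      field_simp
      ring
    rw [e6]
    have h8 : (0:ℝ) ≤ y ^ (-β/p) * (1 - y ^ (1/p:ℝ)) ^ (β-1) :=
      mul_nonneg (Real.rpow_nonneg hy0.le _) (Real.rpow_nonneg (by linarith) _)
    have h9 : 2 * (1 + y ^ (1/p:ℝ)) ^ (β-1) ≤ 2 ^ (β+1) := by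
      rw [show (β+1:ℝ) = 1 + β by ring, Real.rpow_add (by norm_num : (0:ℝ) < 2),
        Real.rpow_one]
      exact mul_le_mul_of_nonneg_left (one_add_rpow_le hyp0 hyp1 (by linarith)) (by norm_num)
    exact mul_le_mul_of_nonneg_right h9 h8
  calc ∫ y in Ioo (0:ℝ) 1, |2*y| • ((y^2) ^ (-β/p - α/(2*p)) * (1 - (y^2) ^ (1/p:ℝ)) ^ (β - 1))
      ≤ ∫ y in Ioo (0:ℝ) 1, 2 ^ (β+1) * (y ^ (-β/p) * (1 - y ^ (1/p:ℝ)) ^ (β - 1)) :=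
        setIntegral_mono_on hint1 (hFint.const_mul _) measurableSet_Ioo hbound
    _ = 2 ^ (β+1) * ∫ x in Ioo (0:ℝ) 1, x ^ (-β/p) * (1 - x ^ (1/p:ℝ)) ^ (β - 1) :=
        MeasureTheory.integral_const_mul _ _

-- from f.lean
lemma kernel_nonneg {p q β : ℝ} (hp : 1 ≤ p) {x : ℝ} (hx : x ∈ Ioo (0:ℝ) 1) :
    0 ≤ x ^ q * (1 - x ^ (1/p:ℝ)) ^ (β - 1) := by
  have h1 : x ^ (1/p:ℝ) ≤ 1 := Real.rpow_le_one hx.1.le hx.2.le (by positivity)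
  exact mul_nonneg (Real.rpow_nonneg hx.1.le _) (Real.rpow_nonneg (by linarith) _)

lemma numer_le {p α β x0 : ℝ} (hp : 1 ≤ p) (hpe : p = α + β) (hα : 1 ≤ α) (hβ : 1/2 ≤ β)
    (hx0 : x0 ∈ Ioo (0:ℝ) 1) :
    ∫ x in Ioo (0:ℝ) x0, x ^ (-β/p) * (1 - x ^ (1/p:ℝ)) ^ (β - 1)
      ≤ 2 ^ (β+1) * x0 ^ (α/(2*p)) *
        ∫ x in Ioo (0:ℝ) 1, x ^ (-β/p) * (1 - x ^ (1/p:ℝ)) ^ (β-1) := by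
  have hp0 : (0:ℝ) < p := by linarith
  have hρ : (0:ℝ) < α/(2*p) := by positivity
  have hqF : (-1:ℝ) < -β/p := by
    rw [neg_div, neg_lt_neg_iff, div_lt_one hp0]; linarith
  have hqG : (-1:ℝ) < -β/p - α/(2*p) := by
    rw [show -β/p - α/(2*p) = -((β + α/2)/p) by ring, neg_lt_neg_iff, div_lt_one hp0]
    linarith
  have hFint := integrableOn_kernel hp hqF (by linarith : (0:ℝ) < β)
  have hGint := integrableOn_kernel hp hqG (by linarith : (0:ℝ) < β)
  have hsub : Ioo (0:ℝ) x0 ⊆ Ioo (0:ℝ) 1 := Ioo_subset_Ioo le_rfl hx0.2.le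
  -- step 1 : pointwise bound on Ioo 0 x0
  have hstep1 : ∫ x in Ioo (0:ℝ) x0, x ^ (-β/p) * (1 - x ^ (1/p:ℝ)) ^ (β - 1)
      ≤ x0 ^ (α/(2*p)) *
        ∫ x in Ioo (0:ℝ) 1, x ^ (-β/p - α/(2*p)) * (1 - x ^ (1/p:ℝ)) ^ (β-1) := by
    have hb : ∀ x ∈ Ioo (0:ℝ) x0, x ^ (-β/p) * (1 - x ^ (1/p:ℝ)) ^ (β - 1)
        ≤ x0 ^ (α/(2*p)) * (x ^ (-β/p - α/(2*p)) * (1 - x ^ (1/p:ℝ)) ^ (β-1)) := by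
      intro x ⟨hx1, hx2⟩
      have e1 : x ^ (-β/p) = x ^ (α/(2*p)) * x ^ (-β/p - α/(2*p)) := by
        rw [← Real.rpow_add hx1]; ring_nf
      rw [e1, mul_assoc]
      exact mul_le_mul_of_nonneg_right (Real.rpow_le_rpow hx1.le hx2.le hρ.le)
        (kernel_nonneg hp ⟨hx1, lt_trans hx2 hx0.2⟩ (q := -β/p - α/(2*p)))
    calc ∫ x in Ioo (0:ℝ) x0, x ^ (-β/p) * (1 - x ^ (1/p:ℝ)) ^ (β - 1)
        ≤ ∫ x in Ioo (0:ℝ) x0,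
            x0 ^ (α/(2*p)) * (x ^ (-β/p - α/(2*p)) * (1 - x ^ (1/p:ℝ)) ^ (β-1)) :=
          setIntegral_mono_on (hFint.mono_set hsub)
            ((hGint.mono_set hsub).const_mul _) measurableSet_Ioo hb
      _ = x0 ^ (α/(2*p)) * ∫ x in Ioo (0:ℝ) x0,
            x ^ (-β/p - α/(2*p)) * (1 - x ^ (1/p:ℝ)) ^ (β-1) :=
          MeasureTheory.integral_const_mul _ _
      _ ≤ x0 ^ (α/(2*p)) * ∫ x in Ioo (0:ℝ) 1,
            x ^ (-β/p - α/(2*p)) * (1 - x ^ (1/p:ℝ)) ^ (β-1) := by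
          apply mul_le_mul_of_nonneg_left _ (Real.rpow_nonneg hx0.1.le _)
          apply setIntegral_mono_set hGint
          · rw [EventuallyLE, ae_restrict_iff' measurableSet_Ioo]
            exact Eventually.of_forall fun x hx => kernel_nonneg hp hx
          · exact HasSubset.Subset.eventuallyLE hsub
  calc ∫ x in Ioo (0:ℝ) x0, x ^ (-β/p) * (1 - x ^ (1/p:ℝ)) ^ (β - 1)
      ≤ x0 ^ (α/(2*p)) *
        ∫ x in Ioo (0:ℝ) 1, x ^ (-β/p - α/(2*p)) * (1 - x ^ (1/p:ℝ)) ^ (β-1) := hstep1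
    _ ≤ x0 ^ (α/(2*p)) * (2 ^ (β+1) *
        ∫ x in Ioo (0:ℝ) 1, x ^ (-β/p) * (1 - x ^ (1/p:ℝ)) ^ (β-1)) :=
        mul_le_mul_of_nonneg_left (step2 hp hpe hα hβ) (Real.rpow_nonneg hx0.1.le _)
    _ = 2 ^ (β+1) * x0 ^ (α/(2*p)) *
        ∫ x in Ioo (0:ℝ) 1, x ^ (-β/p) * (1 - x ^ (1/p:ℝ)) ^ (β-1) := by ring

lemma denom_pos {p β : ℝ} (hp : 1 ≤ p) (hβ : 0 < β) (hq : -1 < -β/p) :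
    0 < ∫ x in Ioo (0:ℝ) 1, x ^ (-β/p) * (1 - x ^ (1/p:ℝ)) ^ (β - 1) := by
  have hFint := integrableOn_kernel hp hq hβ
  rw [setIntegral_pos_iff_support_of_nonneg_ae]
  · have hss : Ioo (0:ℝ) 1 ⊆ Function.support
        (fun x : ℝ => x ^ (-β/p) * (1 - x ^ (1/p:ℝ)) ^ (β - 1)) := by
      intro x hx
      have h1 : x ^ (1/p:ℝ) < 1 := Real.rpow_lt_one hx.1.le hx.2 (by positivity)
      have : 0 < x ^ (-β/p) * (1 - x ^ (1/p:ℝ)) ^ (β - 1) :=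
        mul_pos (Real.rpow_pos_of_pos hx.1 _) (Real.rpow_pos_of_pos (by linarith) _)
      exact fun hc => this.ne' hc
    rw [inter_eq_right.2 hss]
    simp [Real.volume_Ioo]
  · rw [EventuallyLE, ae_restrict_iff' measurableSet_Ioo]
    exact Eventually.of_forall fun x hx => kernel_nonneg hp hx
  · exact hFint

lemma split_integral {p β x0 : ℝ} (hp : 1 ≤ p) (hβ : 0 < β) (hq : -1 < -β/p)
    (hx0 : x0 ∈ Ioo (0:ℝ) 1) :
    ∫ x in Ioo x0 1, x ^ (-β/p) * (1 - x ^ (1/p:ℝ)) ^ (β - 1)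
      = (∫ x in Ioo (0:ℝ) 1, x ^ (-β/p) * (1 - x ^ (1/p:ℝ)) ^ (β - 1))
        - ∫ x in Ioo (0:ℝ) x0, x ^ (-β/p) * (1 - x ^ (1/p:ℝ)) ^ (β - 1) := by
  have hFint := integrableOn_kernel hp hq hβ
  have hu : Ioo (0:ℝ) 1 = Ioo (0:ℝ) x0 ∪ Ico x0 1 := by
    rw [Ioo_union_Ico_eq_Ioo hx0.1 hx0.2.le]
  have hdisj : Disjoint (Ioo (0:ℝ) x0) (Ico x0 1) := by
    apply Set.disjoint_left.2
    rintro x ⟨_, h2⟩ ⟨h3, _⟩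
    exact absurd h3 (not_le.2 h2)
  have := setIntegral_union hdisj measurableSet_Ico
    (hFint.mono_set (by rw [hu]; exact subset_union_left))
    (hFint.mono_set (by rw [hu]; exact subset_union_right))
  rw [← hu] at this
  rw [MeasureTheory.integral_Ico_eq_integral_Ioo] at this
  rw [this]
  ring

-- from g.lean
lemma sigmaHyp_pos {d k : ℕ} (hk : 2 ≤ k) (h2 : d + 1 < 2*k) : 0 < sigmaHyp d k := by
  apply Real.sqrt_pos.2
  have hα : (0:ℝ) < (2 * (k:ℝ) - d - 1)/2 := by
    have : ((d:ℝ) + 1) < 2 * k := by exact_mod_cast h2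
    linarith
  have hkr : (0:ℝ) < ((k:ℝ) - 1)/2 := by
    have : (2:ℝ) ≤ k := by exact_mod_cast hk
    linarith
  have g1 := Real.Gamma_pos_of_pos hα
  have g2 := Real.Gamma_pos_of_pos hkr
  positivity

lemma sigmaHyp_le {d k : ℕ} (h1 : k + 1 ≤ d)
    (hα : 1 ≤ (2 * (k:ℝ) - d - 1)/2) :
    sigmaHyp d k ≤ (Real.pi / ((2 * (k:ℝ) - d - 1)/2 - 1/2)) ^ (((d:ℝ) - k)/4) := by
  set α := (2 * (k:ℝ) - (d:ℝ) - 1)/2 with hαdef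
  have hkd : k ≤ d := by omega
  have hm : (((d - k : ℕ)):ℝ) = (d:ℝ) - k := by
    push_cast [hkd]
    ring
  have hμ : (1:ℝ) ≤ (d:ℝ) - k := by
    have : ((k:ℝ) + 1) ≤ d := by exact_mod_cast h1
    linarith
  have hγ := gamma_ratio_lower hα (d - k)
  rw [hm] at hγ
  have he : α + ((d:ℝ) - k)/2 = ((k:ℝ) - 1)/2 := by rw [hαdef]; ring
  rw [he] at hγ
  have hpos1 : (0:ℝ) < α - 1/2 := by linarith
  have hGα : 0 < Real.Gamma α := Real.Gamma_pos_of_pos (by linarith)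
  have hGk : 0 < Real.Gamma (((k:ℝ) - 1)/2) := Real.Gamma_pos_of_pos (by
    have : α + ((d:ℝ) - k)/2 ≥ 1 := by linarith
    linarith [he ▸ this])
  have hrpos : (0:ℝ) < (α - 1/2) ^ (((d:ℝ) - k)/2) := Real.rpow_pos_of_pos hpos1 _
  have harg : Real.pi ^ (((d:ℝ) - k)/2) * Real.Gamma α / Real.Gamma (((k:ℝ) - 1)/2)
      ≤ (Real.pi / (α - 1/2)) ^ (((d:ℝ) - k)/2) := by
    rw [Real.div_rpow Real.pi_pos.le hpos1.le]
    rw [div_le_div_iff₀ hGk hrpos]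
    calc Real.pi ^ (((d:ℝ) - k)/2) * Real.Gamma α * (α - 1/2) ^ (((d:ℝ) - k)/2)
        = Real.pi ^ (((d:ℝ) - k)/2) * ((α - 1/2) ^ (((d:ℝ) - k)/2) * Real.Gamma α) := by ring
      _ ≤ Real.pi ^ (((d:ℝ) - k)/2) * Real.Gamma (((k:ℝ) - 1)/2) := by
          apply mul_le_mul_of_nonneg_left hγ (Real.rpow_nonneg Real.pi_pos.le _)
  calc sigmaHyp d k ≤ Real.sqrt ((Real.pi / (α - 1/2)) ^ (((d:ℝ) - k)/2)) :=
      Real.sqrt_le_sqrt harg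
    _ = (Real.pi / (α - 1/2)) ^ (((d:ℝ) - k)/4) := by
      rw [Real.sqrt_eq_rpow, ← Real.rpow_mul (by positivity)]
      norm_num
      ring_nf

-- from h.lean
lemma Jfrac_est {d k : ℕ} {ε : ℝ} (hε : 0 < ε)
    (h1 : k + 1 ≤ d) (h2 : d + 1 < 2*k)
    (hα1 : 1 ≤ (2 * (k:ℝ) - d - 1)/2)
    (hx01 : sigmaHyp d k * ε < 1) :
    Jfrac d k ε ≤ 1 ∧
    1 - 2 ^ ((((d:ℝ) - k)/2) + 1) * (sigmaHyp d k * ε) ^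
        ((((2 * (k:ℝ) - d - 1)/2)) / (2 * (((k:ℝ) - 1)/2)))
      ≤ Jfrac d k ε := by
  have hk3 : 3 ≤ k := by omega
  have hk3r : (3:ℝ) ≤ (k:ℝ) := by exact_mod_cast hk3
  have hd1 : ((k:ℝ) + 1) ≤ (d:ℝ) := by exact_mod_cast h1
  set p : ℝ := ((k:ℝ) - 1)/2 with hpdef
  set α : ℝ := (2 * (k:ℝ) - d - 1)/2 with hadef
  set β : ℝ := ((d:ℝ) - k)/2 with hbdef
  have hp : (1:ℝ) ≤ p := by rw [hpdef]; linarith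
  have hpe : p = α + β := by rw [hpdef, hadef, hbdef]; ring
  have hβ : (1/2 : ℝ) ≤ β := by rw [hbdef]; linarith
  have hβ0 : (0:ℝ) < β := by linarith
  have hp0 : (0:ℝ) < p := by linarith
  have hqF : (-1:ℝ) < -β/p := by
    rw [neg_div, neg_lt_neg_iff, div_lt_one hp0]
    rw [hpe]; linarith
  set x0 : ℝ := sigmaHyp d k * ε with hx0def
  have hx0pos : 0 < x0 := mul_pos (sigmaHyp_pos (by omega) h2) hε
  have hx0 : x0 ∈ Ioo (0:ℝ) 1 := ⟨hx0pos, hx01⟩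
  -- rewrite the integrand
  have hk1ne : ((k:ℝ) - 1) ≠ 0 := by linarith
  have e1 : 1 - ((d:ℝ) - 1) / ((k:ℝ) - 1) = -β/p := by
    rw [hbdef, hpdef]
    field_simp
    ring
  have e2 : 2 / ((k:ℝ) - 1) = (1/p : ℝ) := by
    rw [hpdef]
    field_simp
  have e3 : ((d:ℝ) - k)/2 - 1 = β - 1 := by rw [hbdef]
  have hJ : Jfrac d k ε
      = (∫ x in Ioo x0 1, x ^ (-β/p) * (1 - x ^ (1/p:ℝ)) ^ (β - 1)) /
        (∫ x in Ioo (0:ℝ) 1, x ^ (-β/p) * (1 - x ^ (1/p:ℝ)) ^ (β - 1)) := by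
    rw [Jfrac, min_eq_left hx01.le, e1, e2, e3]
  set D := ∫ x in Ioo (0:ℝ) 1, x ^ (-β/p) * (1 - x ^ (1/p:ℝ)) ^ (β - 1) with hDdef
  set N0 := ∫ x in Ioo (0:ℝ) x0, x ^ (-β/p) * (1 - x ^ (1/p:ℝ)) ^ (β - 1) with hN0def
  have hDpos : 0 < D := denom_pos hp hβ0 hqF
  have hsplit := split_integral hp hβ0 hqF hx0
  have hN0nn : 0 ≤ N0 := by
    rw [hN0def]
    apply setIntegral_nonneg measurableSet_Ioo
    intro x hx
    exact kernel_nonneg hp ⟨hx.1, lt_trans hx.2 hx01⟩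
  have hNle := numer_le hp hpe hα1 hβ hx0
  rw [← hN0def, ← hDdef] at hNle hsplit
  rw [hJ, hsplit]
  constructor
  · rw [div_le_one hDpos]; linarith
  · rw [le_div_iff₀ hDpos]
    have hE : (0:ℝ) ≤ 2 ^ (β+1) * x0 ^ (α/(2*p)) := by positivity
    calc (1 - 2 ^ (β + 1) * x0 ^ (α/(2*p))) * D
        = D - 2 ^ (β+1) * x0 ^ (α/(2*p)) * D := by ring
      _ ≤ D - N0 := by linarith

-- from i.lean
lemma Ebound {d k : ℕ} {ε δ : ℝ} (hε : 0 < ε) (hδ : 0 < δ)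
    (h1 : k + 1 ≤ d) (h2 : d + 1 < 2*k)
    (hr : 1/2 + δ ≤ (k:ℝ)/(d:ℝ))
    (hD : (4:ℝ) ^ ((8:ℝ)/δ) * Real.pi + 2 * Real.pi * (max 1 ε) ^ (4:ℝ) + 2 ≤ δ * d) :
    sigmaHyp d k * ε < 1 ∧ 1 ≤ (2 * (k:ℝ) - d - 1)/2 ∧
    2 ^ ((((d:ℝ) - k)/2) + 1) * (sigmaHyp d k * ε) ^
        ((((2 * (k:ℝ) - d - 1)/2)) / (2 * (((k:ℝ) - 1)/2)))
      ≤ (max 1 ε) ^ ((1:ℝ)/2) *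
          (((4:ℝ) ^ ((8:ℝ)/δ) * Real.pi) / (δ * d - 1)) ^ (δ/8) := by
  set Mε : ℝ := max 1 ε with hMdef
  set A : ℝ := (4:ℝ) ^ ((8:ℝ)/δ) * Real.pi with hAdef
  have hM1 : (1:ℝ) ≤ Mε := le_max_left _ _
  have hM0 : (0:ℝ) < Mε := by linarith
  have hM4 : (1:ℝ) ≤ Mε ^ (4:ℝ) := Real.one_le_rpow hM1 (by norm_num)
  have hM4' : (0:ℝ) < Mε ^ (4:ℝ) := by positivity
  have h41 : (1:ℝ) ≤ (4:ℝ) ^ ((8:ℝ)/δ) := Real.one_le_rpow (by norm_num) (by positivity)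
  have hπ : (3:ℝ) ≤ Real.pi := Real.pi_gt_three.le
  have hA3 : (3:ℝ) ≤ A := by
    calc (3:ℝ) ≤ Real.pi := hπ
      _ = 1 * Real.pi := (one_mul _).symm
      _ ≤ A := by rw [hAdef]; exact mul_le_mul_of_nonneg_right h41 Real.pi_pos.le
  have hk3 : 3 ≤ k := by omega
  have hkr : (3:ℝ) ≤ (k:ℝ) := by exact_mod_cast hk3
  have hd0 : (0:ℝ) < (d:ℝ) := by
    have h4d : 4 ≤ d := by omega
    have : (4:ℝ) ≤ (d:ℝ) := by exact_mod_cast h4d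
    linarith
  have hkd : ((k:ℝ) + 1) ≤ (d:ℝ) := by exact_mod_cast h1
  set α : ℝ := (2 * (k:ℝ) - d - 1)/2 with hadef
  set μ : ℝ := (d:ℝ) - k with hμdef
  have hμ1 : (1:ℝ) ≤ μ := by rw [hμdef]; linarith
  have hkge : ((1:ℝ)/2 + δ) * d ≤ (k:ℝ) := (le_div_iff₀ hd0).1 hr
  have hprod : (0:ℝ) ≤ 2 * Real.pi * Mε ^ (4:ℝ) := by positivity
  have hαlb : δ * d - 1/2 ≤ α := by
    rw [hadef]
    have : (1:ℝ)/2 * d + δ * d ≤ (k:ℝ) := by linarith [hkge]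
    linarith
  have hα12 : A + 2 * Real.pi * Mε ^ (4:ℝ) + 1 ≤ α - 1/2 := by linarith
  have hα1 : (1:ℝ) ≤ α := by linarith
  have hαpos : (0:ℝ) < α - 1/2 := by linarith
  set Xb : ℝ := Real.pi / (α - 1/2) with hXdef
  have hX0 : 0 < Xb := by positivity
  have hσpos : 0 < sigmaHyp d k := sigmaHyp_pos (by omega) h2
  have hσle : sigmaHyp d k ≤ Xb ^ (μ/4) := by
    have := sigmaHyp_le h1 hα1
    rwa [← hadef, ← hXdef, ← hμdef] at this
  have hMM : Mε ^ (-4:ℝ) * Mε ^ (4:ℝ) = 1 := by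
    rw [← Real.rpow_add hM0]; norm_num
  have hXsmall : Xb ≤ 1/2 * Mε ^ (-4:ℝ) := by
    rw [hXdef, div_le_iff₀ hαpos]
    have h6 : (1/2 * Mε ^ (-4:ℝ)) * (2 * Real.pi * Mε ^ (4:ℝ)) = Real.pi := by
      linear_combination Real.pi * hMM
    calc Real.pi = (1/2 * Mε ^ (-4:ℝ)) * (2 * Real.pi * Mε ^ (4:ℝ)) := h6.symm
      _ ≤ (1/2 * Mε ^ (-4:ℝ)) * (α - 1/2) := by
        apply mul_le_mul_of_nonneg_left _ (by positivity)
        linarith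
  have hX1 : Xb ≤ 1 := by
    have : Mε ^ (-4:ℝ) ≤ 1 := Real.rpow_le_one_of_one_le_of_nonpos hM1 (by norm_num)
    linarith
  have hx01 : sigmaHyp d k * ε < 1 := by
    have hb1 : sigmaHyp d k ≤ Xb ^ ((1:ℝ)/4) := by
      calc sigmaHyp d k ≤ Xb ^ (μ/4) := hσle
        _ ≤ Xb ^ ((1:ℝ)/4) := by
          apply Real.rpow_le_rpow_of_exponent_ge hX0 hX1
          linarith
    have hb2 : Xb ^ ((1:ℝ)/4) < Mε⁻¹ := by
      calc Xb ^ ((1:ℝ)/4) ≤ (1/2 * Mε ^ (-4:ℝ)) ^ ((1:ℝ)/4) :=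
          Real.rpow_le_rpow hX0.le hXsmall (by norm_num)
        _ = (1/2 : ℝ) ^ ((1:ℝ)/4) * Mε⁻¹ := by
          have hstep : (Mε ^ (-4:ℝ)) ^ ((1:ℝ)/4) = Mε⁻¹ := by
            rw [← Real.rpow_mul hM0.le]
            norm_num [Real.rpow_neg_one]
          rw [Real.mul_rpow (by norm_num) (by positivity), hstep]
        _ < 1 * Mε⁻¹ := by
          apply mul_lt_mul_of_pos_right _ (by positivity)
          apply Real.rpow_lt_one (by norm_num) (by norm_num) (by norm_num)
        _ = Mε⁻¹ := one_mul _
    calc sigmaHyp d k * ε ≤ Xb ^ ((1:ℝ)/4) * ε :=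
        mul_le_mul_of_nonneg_right hb1 hε.le
      _ < Mε⁻¹ * ε := mul_lt_mul_of_pos_right hb2 hε
      _ ≤ Mε⁻¹ * Mε := mul_le_mul_of_nonneg_left (le_max_right _ _) (inv_nonneg.2 hM0.le)
      _ = 1 := inv_mul_cancel₀ hM0.ne'
  refine ⟨hx01, hα1, ?_⟩
  set ρ : ℝ := α / (2 * (((k:ℝ) - 1)/2)) with hρdef
  have hkm1 : (0:ℝ) < (k:ℝ) - 1 := by linarith
  have hρ2 : ρ = α / ((k:ℝ) - 1) := by rw [hρdef]; ring_nf
  have hρpos : 0 < ρ := by rw [hρ2]; positivity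
  have hρub : ρ ≤ 1/2 := by
    rw [hρ2, div_le_iff₀ hkm1, hadef]
    linarith
  have hδd1 : (5:ℝ) ≤ δ * d := by linarith
  have hρlb : δ/2 ≤ ρ := by
    rw [hρ2, le_div_iff₀ hkm1]
    have h7 : ((k:ℝ) - 1) ≤ (d:ℝ) := by linarith
    have h8 : δ/2 * ((k:ℝ) - 1) ≤ δ/2 * d := by
      apply mul_le_mul_of_nonneg_left h7 (by positivity)
    linarith
  have hσε0 : (0:ℝ) ≤ sigmaHyp d k * ε := by positivity
  have e1 : (sigmaHyp d k * ε) ^ ρ = sigmaHyp d k ^ ρ * ε ^ ρ :=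
    Real.mul_rpow hσpos.le hε.le
  have hεle : ε ^ ρ ≤ Mε ^ ((1:ℝ)/2) := by
    calc ε ^ ρ ≤ Mε ^ ρ := Real.rpow_le_rpow hε.le (le_max_right _ _) hρpos.le
      _ ≤ Mε ^ ((1:ℝ)/2) := Real.rpow_le_rpow_of_exponent_le hM1 hρub
  have hσρ : sigmaHyp d k ^ ρ ≤ Xb ^ (μ * δ/8) := by
    calc sigmaHyp d k ^ ρ ≤ (Xb ^ (μ/4)) ^ ρ :=
        Real.rpow_le_rpow hσpos.le hσle hρpos.le
      _ = Xb ^ (μ/4 * ρ) := (Real.rpow_mul hX0.le _ _).symm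
      _ ≤ Xb ^ (μ * δ/8) := by
        apply Real.rpow_le_rpow_of_exponent_ge hX0 hX1
        have h10 : μ * (δ/2) ≤ μ * ρ :=
          mul_le_mul_of_nonneg_left hρlb (by linarith)
        linarith
  have h2pow : (2:ℝ) ^ (μ/2 + 1) ≤ (2:ℝ) ^ (2*μ) :=
    Real.rpow_le_rpow_of_exponent_le (by norm_num) (by linarith)
  have e2 : (2:ℝ) ^ (2*μ) = (4:ℝ) ^ μ := by
    have h4 : (4:ℝ) = (2:ℝ) ^ (2:ℝ) := by
      rw [show (2:ℝ) = ((2:ℕ):ℝ) from by norm_num, Real.rpow_natCast]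
      norm_num
    rw [h4, ← Real.rpow_mul (by norm_num : (0:ℝ) ≤ 2)]
  have e3 : (4:ℝ) ^ μ = ((4:ℝ) ^ ((8:ℝ)/δ)) ^ (μ * δ/8) := by
    rw [← Real.rpow_mul (by norm_num : (0:ℝ) ≤ 4)]
    congr 1
    field_simp
  set Y : ℝ := A / (α - 1/2) with hYdef
  have hY0 : 0 < Y := by positivity
  have hY1 : Y ≤ 1 := by
    rw [hYdef, div_le_one hαpos]
    linarith
  have e4 : ((4:ℝ) ^ ((8:ℝ)/δ)) ^ (μ * δ/8) * Xb ^ (μ * δ/8) = Y ^ (μ * δ/8) := by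
    rw [← Real.mul_rpow (by positivity) hX0.le, hYdef, hXdef, hAdef]
    rw [← mul_div_assoc]
  have e5 : Y ^ (μ * δ/8) ≤ Y ^ (δ/8) := by
    apply Real.rpow_le_rpow_of_exponent_ge hY0 hY1
    have h12 := mul_le_mul_of_nonneg_right hμ1 (by positivity : (0:ℝ) ≤ δ/8)
    rw [one_mul] at h12
    calc δ/8 ≤ μ * (δ/8) := h12
      _ = μ * δ/8 := by ring
  have e6 : Y ^ (δ/8) ≤ (A / (δ * d - 1)) ^ (δ/8) := by
    apply Real.rpow_le_rpow hY0.le _ (by positivity)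
    rw [hYdef]
    apply div_le_div_of_nonneg_left (by linarith) (by linarith) (by linarith)
  calc 2 ^ (μ/2 + 1) * (sigmaHyp d k * ε) ^ ρ
      ≤ (2:ℝ) ^ (2*μ) * (Xb ^ (μ * δ/8) * Mε ^ ((1:ℝ)/2)) := by
        rw [e1]
        apply mul_le_mul h2pow _ (by positivity) (by positivity)
        exact mul_le_mul hσρ hεle (by positivity) (by positivity)
    _ = Mε ^ ((1:ℝ)/2) * (((4:ℝ) ^ ((8:ℝ)/δ)) ^ (μ * δ/8) * Xb ^ (μ * δ/8)) := by
        rw [e2, e3]; ring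
    _ = Mε ^ ((1:ℝ)/2) * Y ^ (μ * δ/8) := by rw [e4]
    _ ≤ Mε ^ ((1:ℝ)/2) * (A / (δ * d - 1)) ^ (δ/8) := by
        apply mul_le_mul_of_nonneg_left (le_trans e5 e6) (by positivity)

-- from j.lean
/-- If `(d_n,k_n)` is admissible, `d_n → ∞` and `liminf k_n/d_n > 1/2`,
then `J(d_n,k_n,ε) → 1` for every `ε > 0`. -/
theorem Jfrac_tendsto_one_of_liminf_ratio_gt_half (ε : ℝ) (hε : 0 < ε) (d k : ℕ → ℕ)
    (hadm : ∀ n, 1 ≤ k n ∧ k n + 1 ≤ d n ∧ d n + 1 < 2 * k n)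
    (hd : Tendsto d atTop atTop)
    (hliminf : (1 / 2 : EReal) <
      Filter.liminf (fun n => (((k n : ℝ) / (d n : ℝ) : ℝ) : EReal)) atTop) :
    Tendsto (fun n => Jfrac (d n) (k n) ε) atTop (nhds 1) := by
  -- extract a real ratio bound
  obtain ⟨c, hc1, hc2⟩ := exists_between hliminf
  have hctop : c ≠ ⊤ := (hc2.trans_le le_top).ne
  have hcbot : c ≠ ⊥ := by
    intro h
    rw [h] at hc1
    exact absurd hc1 (by simp)
  set r : ℝ := c.toReal with hrdef
  have hcr : (r : EReal) = c := EReal.coe_toReal hctop hcbot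
  have hhalf : ((1/2 : ℝ) : EReal) = (1/2 : EReal) := by
    rw [one_div, one_div, EReal.coe_inv]
    norm_cast
  have hr2 : (1/2 : ℝ) < r := by
    rw [← EReal.coe_lt_coe_iff, hcr, hhalf]
    exact hc1
  set δ : ℝ := r - 1/2 with hδdef
  have hδ : 0 < δ := by rw [hδdef]; linarith
  have hev1 : ∀ᶠ n in atTop, 1/2 + δ ≤ ((k n : ℝ)/(d n : ℝ)) := by
    have h := eventually_lt_of_lt_liminf hc2
    filter_upwards [h] with n hn
    have : r < ((k n : ℝ)/(d n : ℝ)) := by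
      rw [← EReal.coe_lt_coe_iff, hcr]
      exact hn
    rw [hδdef]
    linarith
  -- eventual largeness of δ * d n
  set B : ℝ := (4:ℝ) ^ ((8:ℝ)/δ) * Real.pi + 2 * Real.pi * (max 1 ε) ^ (4:ℝ) + 2 with hBdef
  have hev2 : ∀ᶠ n in atTop, B ≤ δ * (d n : ℝ) := by
    have hdr : Tendsto (fun n => (d n : ℝ)) atTop atTop :=
      tendsto_natCast_atTop_atTop.comp hd
    have h2 : Tendsto (fun n => δ * (d n : ℝ)) atTop atTop := hdr.const_mul_atTop hδ
    exact h2.eventually_ge_atTop B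
  -- the upper bound sequence
  set U : ℕ → ℝ := fun n => (max 1 ε) ^ ((1:ℝ)/2) *
      (((4:ℝ) ^ ((8:ℝ)/δ) * Real.pi) / (δ * (d n : ℝ) - 1)) ^ (δ/8) with hUdef
  have hUlim : Tendsto U atTop (nhds 0) := by
    have hdr : Tendsto (fun n => (d n : ℝ)) atTop atTop :=
      tendsto_natCast_atTop_atTop.comp hd
    have h2 : Tendsto (fun n => δ * (d n : ℝ) - 1) atTop atTop :=
      tendsto_atTop_add_const_right _ (-1) (hdr.const_mul_atTop hδ)
    have h3 : Tendsto (fun n => ((4:ℝ) ^ ((8:ℝ)/δ) * Real.pi) / (δ * (d n : ℝ) - 1))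
        atTop (nhds 0) := Tendsto.div_atTop tendsto_const_nhds h2
    have h4 := h3.rpow_const (p := δ/8) (Or.inr (by positivity))
    rw [Real.zero_rpow (by positivity)] at h4
    have h5 := (tendsto_const_nhds (x := (max 1 ε) ^ ((1:ℝ)/2)) (f := atTop)).mul h4
    rw [mul_zero] at h5
    exact h5
  have hlow : Tendsto (fun n => 1 - U n) atTop (nhds 1) := by
    have := (tendsto_const_nhds (x := (1:ℝ)) (f := atTop)).sub hUlim
    rw [sub_zero] at this
    exact this
  apply tendsto_of_tendsto_of_tendsto_of_le_of_le' hlow tendsto_const_nhds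
  · -- lower bound eventually
    filter_upwards [hev1, hev2] with n h1n h2n
    obtain ⟨hx01, hα1, hEb⟩ := Ebound hε hδ (hadm n).2.1 (hadm n).2.2 h1n h2n
    have hJ := Jfrac_est hε (hadm n).2.1 (hadm n).2.2 hα1 hx01
    have := hJ.2
    have hUb : 1 - U n ≤ 1 - 2 ^ ((((d n:ℝ) - k n)/2) + 1) * (sigmaHyp (d n) (k n) * ε) ^
        ((((2 * (k n:ℝ) - d n - 1)/2)) / (2 * (((k n:ℝ) - 1)/2))) := by
      simp only [hUdef]
      linarith
    linarith
  · filter_upwards [hev1, hev2] with n h1n h2n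
    obtain ⟨hx01, hα1, _⟩ := Ebound hε hδ (hadm n).2.1 (hadm n).2.2 h1n h2n
    exact (Jfrac_est hε (hadm n).2.1 (hadm n).2.2 hα1 hx01).1
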